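/- Decomposition of the running negative-part supremum (key identity in the proof of the flow property of the reflection map): Let r0 ∈ ℝ and let β : ℝ → ℝ be bounded on [r0, r] for every r ≥ r0. Then for all r0 ≤ r' ≤ r, sup_{u ∈ [r0, r]} max(−β(u), 0) = sup_{u ∈ [r0, r']} max(−β(u), 0) + sup_{v ∈ [r', r]} max(−(β(v) + sup_{u ∈ [r0, r']} max(−β(u), 0)), 0). -/

import Mathlib

/-- Decomposition of the running negative-part supremum: for `r0 ≤ r' ≤ r` and `β` bounded on
each interval `[r0, r]`,
`sup_{u ∈ [r0, r]} [β(u)]_− = sup_{u ∈ [r0, r']} [β(u)]_−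
  + sup_{v ∈ [r', r]} [β(v) + sup_{u ∈ [r0, r']} [β(u)]_−]_−`,
where `[x]_− = max(−x, 0)`. -/
theorem negPart_sup_decomposition (r0 : ℝ) (β : ℝ → ℝ)
    (hβ : ∀ r, r0 ≤ r → ∃ M, ∀ u ∈ Set.Icc r0 r, |β u| ≤ M)
    (r' r : ℝ) (h1 : r0 ≤ r') (h2 : r' ≤ r) :
    sSup ((fun u => max (-β u) 0) '' Set.Icc r0 r) =
      sSup ((fun u => max (-β u) 0) '' Set.Icc r0 r') +
        sSup ((fun v => max (-(β v + sSup ((fun u => max (-β u) 0) '' Set.Icc r0 r'))) 0) ''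
          Set.Icc r' r) := by
  set f : ℝ → ℝ := fun u => max (-β u) 0 with hf
  have h02 : r0 ≤ r := le_trans h1 h2
  obtain ⟨M, hM⟩ := hβ r h02
  have hM0 : 0 ≤ M := le_trans (abs_nonneg _) (hM r0 ⟨le_refl _, h02⟩)
  have hfM : ∀ u ∈ Set.Icc r0 r, f u ≤ M := fun u hu =>
    max_le (le_trans (neg_le_abs _) (hM u hu)) hM0
  have hsub : Set.Icc r0 r' ⊆ Set.Icc r0 r := Set.Icc_subset_Icc_right h2
  have hsub2 : Set.Icc r' r ⊆ Set.Icc r0 r := Set.Icc_subset_Icc_left h1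
  have hne1 : (f '' Set.Icc r0 r).Nonempty := ⟨f r0, ⟨r0, ⟨le_refl _, h02⟩, rfl⟩⟩
  have hne2 : (f '' Set.Icc r0 r').Nonempty := ⟨f r0, ⟨r0, ⟨le_refl _, h1⟩, rfl⟩⟩
  have hbdd1 : BddAbove (f '' Set.Icc r0 r) := ⟨M, by rintro x ⟨u, hu, rfl⟩; exact hfM u hu⟩
  have hbdd2 : BddAbove (f '' Set.Icc r0 r') :=
    hbdd1.mono (Set.image_mono hsub)
  set B := sSup (f '' Set.Icc r0 r') with hB
  set A := sSup (f '' Set.Icc r0 r) with hA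
  have hB0 : 0 ≤ B :=
    le_trans (le_max_right _ _) (le_csSup hbdd2 ⟨r0, ⟨le_refl _, h1⟩, rfl⟩)
  have hBA : B ≤ A := csSup_le_csSup hbdd1 hne2 (Set.image_mono hsub)
  have hfB : ∀ u ∈ Set.Icc r0 r', f u ≤ B := fun u hu => le_csSup hbdd2 ⟨u, hu, rfl⟩
  have hfA : ∀ u ∈ Set.Icc r0 r, f u ≤ A := fun u hu => le_csSup hbdd1 ⟨u, hu, rfl⟩
  have hg : ∀ v, max (-(β v + B)) 0 = max (f v - B) 0 := by
    intro v
    rcases le_total (β v) 0 with h | h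
    · have hv : f v = -β v := max_eq_left (by linarith)
      rw [hv]; ring_nf
    · have hv : f v = 0 := max_eq_right (by linarith)
      rw [hv, max_eq_right (by linarith : -(β v + B) ≤ 0),
        max_eq_right (by linarith : 0 - B ≤ 0)]
  have himg : ((fun v => max (-(β v + B)) 0) '' Set.Icc r' r)
      = ((fun v => max (f v - B) 0) '' Set.Icc r' r) := by
    apply Set.image_congr
    intro v _
    exact hg v
  rw [himg]
  set C := sSup ((fun v => max (f v - B) 0) '' Set.Icc r' r) with hC
  have hneC : ((fun v => max (f v - B) 0) '' Set.Icc r' r).Nonempty :=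
    ⟨_, ⟨r', ⟨le_refl _, h2⟩, rfl⟩⟩
  have hbddC : BddAbove ((fun v => max (f v - B) 0) '' Set.Icc r' r) := by
    refine ⟨M, ?_⟩
    rintro x ⟨v, hv, rfl⟩
    exact max_le (by linarith [hfM v (hsub2 hv)]) hM0
  have hC0 : 0 ≤ C :=
    le_trans (le_max_right _ _) (le_csSup hbddC ⟨r', ⟨le_refl _, h2⟩, rfl⟩)
  apply le_antisymm
  · apply csSup_le hne1
    rintro x ⟨u, hu, rfl⟩
    rcases le_total u r' with h | h
    · have := hfB u ⟨hu.1, h⟩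
      linarith
    · have hgu : f u - B ≤ C :=
        le_trans (le_max_left _ _) (le_csSup hbddC ⟨u, ⟨h, hu.2⟩, rfl⟩)
      linarith
  · have hCle : C ≤ A - B := by
      apply csSup_le hneC
      rintro x ⟨v, hv, rfl⟩
      exact max_le (by linarith [hfA v (hsub2 hv)]) (by linarith)
    linarith
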